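/- Let T > 0, let (Ω, 𝒜, ℙ) be a probability space with a filtration (ℱ_s)_{s∈[0,T]}, and let ξ : [0,T] × Ω → ℝ^m be a stochastic process. Suppose that for every k ∈ ℕ there exists a process η^k : [0,T] × Ω → ℝ^m that is progressively measurable with respect to (ℱ_s)_{s∈[0,T]} and satisfies ℙ{ ω : |ξ_s(ω) − η^k_s(ω)| ≥ 2^{−k} } ≤ 2^{−k} for every s ∈ [0,T]. Then ξ admits a progressively measurable version: there exists a process η : [0,T] × Ω → ℝ^m, progressively measurable with respect to (ℱ_s)_{s∈[0,T]}, such that for every s ∈ [0,T] one has η_s = ξ_s ℙ-almost surely. -/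
import Mathlib


open MeasureTheory Set Filter

/-- A process `χ` on `[a,T] × Ω` is progressively measurable w.r.t. the filtration `ℱ` if
for every `t ∈ [a,T]` the map `(s,ω) ↦ χ s ω`, restricted to `[a,t] × Ω`, is measurable
with respect to the product σ-algebra `Borel([a,t]) ⊗ ℱ t`. -/
def ProgMeasurableOn {Ω E : Type*} [MeasurableSpace E]
    (ℱ : ℝ → MeasurableSpace Ω) (a T : ℝ) (χ : ℝ → Ω → E) : Prop :=
  ∀ t ∈ Set.Icc a T,
    Measurable[(inferInstance : MeasurableSpace (Set.Icc a t)).prod (ℱ t)]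
      fun p : Set.Icc a t × Ω => χ (p.1 : ℝ) p.2

open Topology
open scoped Classical ENNReal

/-- The pointwise limit (where it exists, with junk value `0` elsewhere) of a sequence of
measurable functions into Euclidean space is measurable. -/
lemma measurable_dlim {α : Type*} [MeasurableSpace α] {m : ℕ}
    {f : ℕ → α → EuclideanSpace ℝ (Fin m)} (hf : ∀ n, Measurable (f n)) :
    Measurable (fun x =>
      if h : ∃ c, Tendsto (fun n => f n x) atTop (𝓝 c) then h.choose else 0) := by
  set S := {x | ∃ c, Tendsto (fun n => f n x) atTop (𝓝 c)} with hSdef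
  have hS : MeasurableSet S := measurableSet_exists_tendsto hf
  have hf' : ∀ n, Measurable (S.piecewise (f n) 0) :=
    fun n => (hf n).piecewise hS measurable_const
  apply measurable_of_tendsto_metrizable hf'
  rw [tendsto_pi_nhds]
  intro x
  by_cases hx : x ∈ S
  · simp only [Set.piecewise_eq_of_mem _ _ _ hx]
    rw [dif_pos (show ∃ c, Tendsto (fun n => f n x) atTop (𝓝 c) from hx)]
    exact hx.choose_spec
  · simp only [Set.piecewise_eq_of_notMem _ _ _ hx]
    rw [dif_neg (show ¬ ∃ c, Tendsto (fun n => f n x) atTop (𝓝 c) from hx)]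
    exact tendsto_const_nhds

/-- Borel–Cantelli selection step of Lemma 2.1: if a process `ξ` on `[0,T]` can, for every
`k`, be approximated by a progressively measurable process `η^k` with
`ℙ{|ξ_s − η^k_s| ≥ 2⁻ᵏ} ≤ 2⁻ᵏ` for all `s ∈ [0,T]`, then `ξ` has a progressively
measurable version. -/
theorem progressive_version_of_approximation
    {Ω : Type*} [MeasurableSpace Ω] (ℙ : Measure Ω) [IsProbabilityMeasure ℙ]
    {m : ℕ} (T : ℝ) (hT : 0 < T)
    (ℱ : ℝ → MeasurableSpace Ω)
    (hℱ_le : ∀ s : ℝ, ℱ s ≤ ‹MeasurableSpace Ω›)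
    (hℱ_mono : ∀ s t : ℝ, s ≤ t → ℱ s ≤ ℱ t)
    (ξ : ℝ → Ω → EuclideanSpace ℝ (Fin m))
    (happrox : ∀ k : ℕ, ∃ η : ℝ → Ω → EuclideanSpace ℝ (Fin m),
      ProgMeasurableOn ℱ 0 T η ∧
      ∀ s ∈ Set.Icc (0 : ℝ) T,
        ℙ {ω | (2 : ℝ)⁻¹ ^ k ≤ ‖ξ s ω - η s ω‖} ≤ 2⁻¹ ^ k) :
    ∃ η : ℝ → Ω → EuclideanSpace ℝ (Fin m),
      ProgMeasurableOn ℱ 0 T η ∧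
      ∀ s ∈ Set.Icc (0 : ℝ) T, ∀ᵐ ω ∂ℙ, η s ω = ξ s ω := by
  choose ζ hζprog hζbound using happrox
  refine ⟨fun s ω =>
      if h : ∃ c, Tendsto (fun k => ζ k s ω) atTop (𝓝 c) then h.choose else 0, ?_, ?_⟩
  · intro t ht
    exact @measurable_dlim _ ((inferInstance : MeasurableSpace (Set.Icc (0:ℝ) t)).prod (ℱ t)) m
      _ (fun k => hζprog k t ht)
  · intro s hs
    -- Borel–Cantelli
    have hsum : (∑' k : ℕ, ℙ {ω | (2 : ℝ)⁻¹ ^ k ≤ ‖ξ s ω - ζ k s ω‖}) ≠ ∞ := by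
      refine ne_top_of_le_ne_top ?_ (ENNReal.tsum_le_tsum fun k => hζbound k s hs)
      rw [ENNReal.tsum_geometric]
      simp
    filter_upwards [ae_eventually_notMem hsum] with ω hω
    have hconv : Tendsto (fun k => ζ k s ω) atTop (𝓝 (ξ s ω)) := by
      rw [tendsto_iff_norm_sub_tendsto_zero]
      have hb : ∀ᶠ k in atTop, ‖ζ k s ω - ξ s ω‖ ≤ (2 : ℝ)⁻¹ ^ k := by
        filter_upwards [hω] with k hk
        rw [norm_sub_rev]
        exact le_of_not_ge hk
      exact squeeze_zero' (Eventually.of_forall fun k => norm_nonneg _) hb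
        (tendsto_pow_atTop_nhds_zero_of_lt_one (by norm_num) (by norm_num))
    have h : ∃ c, Tendsto (fun k => ζ k s ω) atTop (𝓝 c) := ⟨ξ s ω, hconv⟩
    simp only [dif_pos h]
    exact tendsto_nhds_unique h.choose_spec hconv
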